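/- Let κ ∈ {−1, 1} and λ2, λ3 ∈ ℝ. Then the 4×4 complex matrix (1/2)(I⊗I) + (κ/2)(σ1⊗I) + (λ2/2)(σ2⊗σ2) + (λ3/2)(σ3⊗σ3) is positive semidefinite if and only if λ2 = 0 and λ3 = 0. -/

import Mathlib

open Matrix Kronecker ComplexOrder

noncomputable def σ1 : Matrix (Fin 2) (Fin 2) ℂ := !![0, 1; 1, 0]
noncomputable def σ2 : Matrix (Fin 2) (Fin 2) ℂ := !![0, -Complex.I; Complex.I, 0]
noncomputable def σ3 : Matrix (Fin 2) (Fin 2) ℂ := !![1, 0; 0, -1]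

set_option maxHeartbeats 1000000 in
/-- reverse-direction Choi matrix of a Pauli channel in the
boundary case |κ| = 1. -/
theorem stmt10 (κ lam2 lam3 : ℝ) (hκ : κ = -1 ∨ κ = 1) :
    (((1 : ℝ) / 2 : ℝ) • (((1 : Matrix (Fin 2) (Fin 2) ℂ) ⊗ₖ (1 : Matrix (Fin 2) (Fin 2) ℂ)))
        + ((κ / 2 : ℝ) : ℂ) • (σ1 ⊗ₖ (1 : Matrix (Fin 2) (Fin 2) ℂ))
        + ((lam2 / 2 : ℝ) : ℂ) • (σ2 ⊗ₖ σ2)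
        + ((lam3 / 2 : ℝ) : ℂ) • (σ3 ⊗ₖ σ3)).PosSemidef
    ↔ (lam2 = 0 ∧ lam3 = 0) := by
  constructor
  · intro h
    have h1 := h.dotProduct_mulVec_nonneg (fun p => if p = (0,0) then 1 else if p = (1,0) then (-κ*(1+lam3) : ℂ) else 0)
    simp [dotProduct, mulVec, Fintype.sum_prod_type, Fin.sum_univ_two, σ1, σ2, σ3,
      kroneckerMap_apply, Matrix.one_apply, Prod.ext_iff] at h1
    have h2 := h.dotProduct_mulVec_nonneg (fun p => if p = (0,1) then 1 else if p = (1,1) then (-κ*(1-lam3) : ℂ) else 0)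
    simp [dotProduct, mulVec, Fintype.sum_prod_type, Fin.sum_univ_two, σ1, σ2, σ3,
      kroneckerMap_apply, Matrix.one_apply, Prod.ext_iff] at h2
    have h3 := h.dotProduct_mulVec_nonneg (fun p => if p = (0,0) then 1 else if p = (0,1) then ((κ*lam2/2 : ℝ) : ℂ)
        else if p = (1,0) then (-κ : ℂ) else ((lam2/2 : ℝ) : ℂ))
    simp [dotProduct, mulVec, Fintype.sum_prod_type, Fin.sum_univ_two, σ1, σ2, σ3,
      kroneckerMap_apply, Matrix.one_apply, Prod.ext_iff, Complex.conj_ofNat] at h3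
    simp only [show ((2:ℂ))⁻¹ = ((2⁻¹:ℝ):ℂ) by norm_num] at h1 h2 h3
    have h1' : κ * (1 + lam3) * (κ / 2 + -((2⁻¹ + -(lam3 / 2)) * (κ * (1 + lam3))))
        + κ / 2 * (κ * (1 + lam3)) ≤ 2⁻¹ + lam3 / 2 := by
      have h0 := h1; simp only [Complex.ofReal_inv, Complex.ofReal_ofNat] at h0
      rw [← Complex.real_le_real]; push_cast; linear_combination h0
    have h2' : κ * (1 - lam3) * (κ / 2 + -((2⁻¹ + lam3 / 2) * (κ * (1 - lam3))))
        + κ / 2 * (κ * (1 - lam3)) + lam3 / 2 ≤ 2⁻¹ := by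
      have h0 := h2; simp only [Complex.ofReal_inv, Complex.ofReal_ofNat] at h0
      rw [← Complex.real_le_real]; push_cast; linear_combination h0
    have h3' : (0:ℝ) ≤ 2⁻¹ + lam3 / 2 + (-(κ / 2 * κ) + -(lam2 / 2 * (lam2 / 2)))
        + κ * lam2 / 2 * ((2⁻¹ + -(lam3 / 2)) * (κ * lam2 / 2) + (-(lam2 / 2 * κ) + κ / 2 * (lam2 / 2)))
        + (-(κ * (κ / 2 + lam2 / 2 * (κ * lam2 / 2) + -((2⁻¹ + -(lam3 / 2)) * κ)))
          + lam2 / 2 * (-(lam2 / 2) + κ / 2 * (κ * lam2 / 2) + (2⁻¹ + lam3 / 2) * (lam2 / 2))) := by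
      have h0 := h3; simp only [Complex.ofReal_inv, Complex.ofReal_ofNat] at h0
      rw [← Complex.zero_le_real]; push_cast; linear_combination h0
    rcases hκ with h'|h' <;> subst h' <;>
    · constructor
      · nlinarith [h3']
      · nlinarith [h1', h2']
  · rintro ⟨rfl, rfl⟩
    obtain ⟨M, hMdef⟩ : ∃ M, M = ((1 : ℝ) / 2 : ℝ) • (((1 : Matrix (Fin 2) (Fin 2) ℂ) ⊗ₖ (1 : Matrix (Fin 2) (Fin 2) ℂ)))
          + ((κ / 2 : ℝ) : ℂ) • (σ1 ⊗ₖ (1 : Matrix (Fin 2) (Fin 2) ℂ))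
          + (((0:ℝ) / 2 : ℝ) : ℂ) • (σ2 ⊗ₖ σ2)
          + (((0:ℝ) / 2 : ℝ) : ℂ) • (σ3 ⊗ₖ σ3) := ⟨_, rfl⟩
    rw [← hMdef]
    have hM : M = Mᴴ * M := by
      rcases hκ with h'|h' <;> subst h' <;>
      · ext ⟨i,j⟩ ⟨k,l⟩
        fin_cases i <;> fin_cases j <;> fin_cases k <;> fin_cases l <;>
          simp [hMdef, Matrix.mul_apply, Fintype.sum_prod_type, Fin.sum_univ_two, σ1, σ2, σ3,
            kroneckerMap_apply, Matrix.one_apply, conjTranspose_apply, Prod.ext_iff] <;>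
          norm_num
    rw [hM]
    exact posSemidef_conjTranspose_mul_self _
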